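/- Fix real numbers T > 0, T_d > 0, K > 1, ρ_u > 0 and α ∈ (0, 1). For each real M > 1 set ρ(M) = ρ_u/√M and define S(M) = (M − 1)·α(1 − α)·(ρ(M)T)² / ( α(1 − α)(ρ(M)T)²(K − 1) + K(1 − α)ρ(M)T + α·ρ(M)T·T_d + T_d ). Then S(M) converges to α(1 − α)·ρ_u²T²/T_d as M → ∞. -/

import Mathlib

open Filter

/-- With per-user power scaled as `ρ(M) = ρ_u/√M`, the MRC received SNR
`S(M) = (M-1)·α(1-α)(ρ(M)T)² / (α(1-α)(ρ(M)T)²(K-1) + K(1-α)ρ(M)T + αρ(M)T·T_d + T_d)`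
converges to `α(1-α)ρ_u²T²/T_d` as `M → ∞`. -/
theorem mrc_snr_massive_limit (T Td K ρu α : ℝ) (hT : 0 < T) (hTd : 0 < Td)
    (hK : 1 < K) (hρu : 0 < ρu) (hα : α ∈ Set.Ioo (0 : ℝ) 1) :
    Tendsto
      (fun M : ℝ =>
        (M - 1) * (α * (1 - α) * (ρu / Real.sqrt M * T) ^ 2) /
          (α * (1 - α) * (ρu / Real.sqrt M * T) ^ 2 * (K - 1) +
            K * (1 - α) * (ρu / Real.sqrt M * T) + α * (ρu / Real.sqrt M * T) * Td + Td))
      atTop (nhds (α * (1 - α) * ρu ^ 2 * T ^ 2 / Td)) := by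
  obtain ⟨hα0, hα1⟩ := hα
  set c := α * (1 - α) * ρu ^ 2 * T ^ 2 with hc
  have hlim : Tendsto (fun M : ℝ => (c - c / M) /
      (c * (K - 1) / M + (K * (1 - α) * (ρu * T) + α * (ρu * T) * Td) / Real.sqrt M + Td))
      atTop (nhds (c / Td)) := by
    have h1 : Tendsto (fun M : ℝ => c / M) atTop (nhds 0) :=
      tendsto_const_nhds.div_atTop tendsto_id
    have h2 : Tendsto (fun M : ℝ => c * (K - 1) / M) atTop (nhds 0) :=
      tendsto_const_nhds.div_atTop tendsto_id
    have h3 : Tendsto (fun M : ℝ =>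
        (K * (1 - α) * (ρu * T) + α * (ρu * T) * Td) / Real.sqrt M) atTop (nhds 0) :=
      tendsto_const_nhds.div_atTop (tendsto_atTop_atTop.2 fun b => ⟨b ^ 2, fun a ha =>
        le_trans (le_trans (le_abs_self b) (Real.sqrt_sq_eq_abs b).symm.le)
          (Real.sqrt_le_sqrt ha)⟩)
    have hnum : Tendsto (fun M : ℝ => c - c / M) atTop (nhds c) := by
      simpa using tendsto_const_nhds.sub h1
    have hden : Tendsto (fun M : ℝ =>
        c * (K - 1) / M + (K * (1 - α) * (ρu * T) + α * (ρu * T) * Td) / Real.sqrt M + Td)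
        atTop (nhds (0 + 0 + Td)) := (h2.add h3).add tendsto_const_nhds
    simpa [Pi.div_def] using hnum.div hden (by simpa using hTd.ne')
  refine hlim.congr' ?_
  filter_upwards [eventually_gt_atTop (0 : ℝ)] with M hM
  have hs : 0 < Real.sqrt M := Real.sqrt_pos.mpr hM
  have hM2 : Real.sqrt M ^ 2 = M := Real.sq_sqrt hM.le
  rw [← hM2]
  generalize Real.sqrt M = s at hs
  rw [Real.sqrt_sq hs.le]
  have h1α : 0 < 1 - α := by linarith
  have hK1 : 0 < K - 1 := by linarith
  have ht : 0 < ρu / s * T := by positivity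
  have hc0 : 0 < c := by
    rw [hc]; exact mul_pos (mul_pos (mul_pos hα0 h1α) (pow_pos hρu 2)) (pow_pos hT 2)
  have hD1 : 0 < α * (1 - α) * (ρu / s * T) ^ 2 * (K - 1) +
      K * (1 - α) * (ρu / s * T) + α * (ρu / s * T) * Td + Td := by
    have h1 : 0 < α * (1 - α) * (ρu / s * T) ^ 2 * (K - 1) :=
      mul_pos (mul_pos (mul_pos hα0 h1α) (pow_pos ht 2)) hK1
    have h2 : 0 < K * (1 - α) * (ρu / s * T) :=
      mul_pos (mul_pos (by linarith : (0:ℝ) < K) h1α) ht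
    have h3 : 0 < α * (ρu / s * T) * Td := mul_pos (mul_pos hα0 ht) hTd
    linarith
  have hD2 : 0 < c * (K - 1) / s ^ 2 +
      (K * (1 - α) * (ρu * T) + α * (ρu * T) * Td) / s + Td := by
    have h1 : 0 < c * (K - 1) / s ^ 2 := div_pos (mul_pos hc0 hK1) (pow_pos hs 2)
    have h2 : 0 < (K * (1 - α) * (ρu * T) + α * (ρu * T) * Td) / s := by
      apply div_pos _ hs
      have : 0 < K * (1 - α) * (ρu * T) :=
        mul_pos (mul_pos (by linarith : (0:ℝ) < K) h1α) (mul_pos hρu hT)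
      have : 0 < α * (ρu * T) * Td := mul_pos (mul_pos hα0 (mul_pos hρu hT)) hTd
      linarith
    linarith
  rw [div_eq_div_iff hD2.ne' hD1.ne', hc]
  field_simp
  ring
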